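/- Suppose W_l(t) (l = 1,...,L) are continuously differentiable matrix-valued functions of t ≥ 0 satisfying gradient flow dynamics for the loss L(θ) = ℓ(W_L ⋯ W_1) of a deep linear network, i.e., dW_l/dt = -(∏_{j>l} W_j)^T ∇ℓ(W_L⋯W_1) (∏_{j<l} W_j)^T. Then for each l, the quantity W_{l+1}(t)^T W_{l+1}(t) - W_l(t) W_l(t)^T is constant in t. -/

import Mathlib

open Matrix

/-- The partial product `W_{b-1} W_{b-2} ⋯ W_a` of layers `a, a+1, …, b-1` of a deep
linear network with square layers (empty product is the identity). -/
noncomputable def partialProd {n : ℕ} (W : ℕ → Matrix (Fin n) (Fin n) ℝ) (a b : ℕ) :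
    Matrix (Fin n) (Fin n) ℝ :=
  (((List.range' a (b - a)).reverse).map W).prod

lemma partialProd_left {n : ℕ} (W : ℕ → Matrix (Fin n) (Fin n) ℝ) {a b : ℕ} (h : a < b) :
    partialProd W a b = partialProd W (a + 1) b * W a := by
  unfold partialProd
  have h1 : b - a = (b - (a + 1)) + 1 := by omega
  rw [h1, List.range'_succ]
  simp

lemma partialProd_right {n : ℕ} (W : ℕ → Matrix (Fin n) (Fin n) ℝ) {a b : ℕ} (h : a ≤ b) :
    partialProd W a (b + 1) = W b * partialProd W a b := by
  unfold partialProd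
  have h1 : b + 1 - a = (b - a) + 1 := by omega
  rw [h1, List.range'_concat]
  have h2 : a + (b - a) = b := by omega
  simp [h2]

/-- under gradient flow dynamics for a deep linear network with loss
`ℓ(W_L ⋯ W_1)`, i.e. `dW_l/dt = -(∏_{j>l} W_j)ᵀ ∇ℓ(W_L ⋯ W_1) (∏_{j<l} W_j)ᵀ`
(stated entrywise), the imbalance `W_{l+1}ᵀ W_{l+1} - W_l W_lᵀ` is constant in time.
Layers are indexed `0, …, L-1`. -/
theorem imbalance_constant_under_gradient_flow {n L : ℕ}
    (W : ℕ → ℝ → Matrix (Fin n) (Fin n) ℝ)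
    (Gℓ : Matrix (Fin n) (Fin n) ℝ → Matrix (Fin n) (Fin n) ℝ)
    (hflow : ∀ l < L, ∀ t : ℝ, ∀ i j,
      HasDerivAt (fun s => W l s i j)
        ((-((partialProd (fun m => W m t) (l + 1) L)ᵀ *
            Gℓ (partialProd (fun m => W m t) 0 L) *
            (partialProd (fun m => W m t) 0 l)ᵀ)) i j) t) :
    ∀ l, l + 1 < L → ∀ t : ℝ,
      (W (l + 1) t)ᵀ * W (l + 1) t - W l t * (W l t)ᵀ =
      (W (l + 1) 0)ᵀ * W (l + 1) 0 - W l 0 * (W l 0)ᵀ := by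
  intro l hl t
  have hl' : l < L := by omega
  -- derivative matrix of layer m at time s
  set D : ℕ → ℝ → Matrix (Fin n) (Fin n) ℝ := fun m s =>
    -((partialProd (fun k => W k s) (m + 1) L)ᵀ *
      Gℓ (partialProd (fun k => W k s) 0 L) *
      (partialProd (fun k => W k s) 0 m)ᵀ) with hD
  have hDderiv : ∀ m, m < L → ∀ (s : ℝ) (k r : Fin n),
      HasDerivAt (fun u => W m u k r) (D m s k r) s := fun m hm s k r => hflow m hm s k r
  -- the matrix identity making things cancel
  have key : ∀ s : ℝ,
      (D (l+1) s)ᵀ * W (l+1) s + (W (l+1) s)ᵀ * D (l+1) s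
        - (D l s * (W l s)ᵀ + W l s * (D l s)ᵀ) = 0 := by
    intro s
    have hA : partialProd (fun k => W k s) (l + 1) L
        = partialProd (fun k => W k s) (l + 2) L * W (l + 1) s :=
      partialProd_left _ hl
    have hB : partialProd (fun k => W k s) 0 (l + 1)
        = W l s * partialProd (fun k => W k s) 0 l :=
      partialProd_right _ (by omega)
    have h1 : (W (l+1) s)ᵀ * D (l+1) s = D l s * (W l s)ᵀ := by
      rw [hD]
      simp only [Matrix.mul_neg, Matrix.neg_mul, neg_inj]
      rw [hA, hB]
      simp only [Matrix.transpose_mul]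
      noncomm_ring
    have h2 : (D (l+1) s)ᵀ * W (l+1) s = W l s * (D l s)ᵀ := by
      have := congrArg Matrix.transpose h1
      simpa [Matrix.transpose_mul] using this
    rw [h1, h2]
    abel
  -- entrywise constancy
  ext i j
  have hf : ∀ s : ℝ,
      HasDerivAt (fun u => ((W (l + 1) u)ᵀ * W (l + 1) u - W l u * (W l u)ᵀ) i j) 0 s := by
    intro s
    have hs1 : HasDerivAt (fun u => ∑ k, W (l+1) u k i * W (l+1) u k j)
        (∑ k, (D (l+1) s k i * W (l+1) s k j + W (l+1) s k i * D (l+1) s k j)) s :=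
      HasDerivAt.fun_sum fun k _ => (hDderiv (l+1) hl s k i).mul (hDderiv (l+1) hl s k j)
    have hs2 : HasDerivAt (fun u => ∑ k, W l u i k * W l u j k)
        (∑ k, (D l s i k * W l s j k + W l s i k * D l s j k)) s :=
      HasDerivAt.fun_sum fun k _ => (hDderiv l hl' s i k).mul (hDderiv l hl' s j k)
    have hval : (∑ k, (D (l+1) s k i * W (l+1) s k j + W (l+1) s k i * D (l+1) s k j))
        - (∑ k, (D l s i k * W l s j k + W l s i k * D l s j k))
        = ((D (l+1) s)ᵀ * W (l+1) s + (W (l+1) s)ᵀ * D (l+1) s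
            - (D l s * (W l s)ᵀ + W l s * (D l s)ᵀ)) i j := by
      simp [Matrix.sub_apply, Matrix.add_apply, Matrix.mul_apply, Matrix.transpose_apply,
        Finset.sum_add_distrib]
    have h0 : (∑ k, (D (l+1) s k i * W (l+1) s k j + W (l+1) s k i * D (l+1) s k j))
        - (∑ k, (D l s i k * W l s j k + W l s i k * D l s j k)) = 0 := by
      rw [hval, key s]; simp
    have : HasDerivAt (fun u => (∑ k, W (l+1) u k i * W (l+1) u k j) - ∑ k, W l u i k * W l u j k) _ s := hs1.sub hs2
    rw [h0] at this
    convert this using 2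
    simp [Matrix.sub_apply, Matrix.mul_apply, Matrix.transpose_apply]
  exact is_const_of_deriv_eq_zero (fun s => (hf s).differentiableAt)
    (fun s => (hf s).deriv) t 0
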